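/- Let a, b ∈ ℝ with a < b, let n ∈ ℕ with n ≥ 2, and let q ≥ 1. Then |(1/3) A(aⁿ, bⁿ) + (2/3) Aⁿ(a,b) - L_n^n(a,b)| ≤ (5n(b-a)/36)(|b|^{(n-1)q} + |a|^{(n-1)q})^{1/q}. -/

import Mathlib

open Real MeasureTheory

private lemma comp_lem (k : ℕ) (α u v : ℝ) :
    ∫ x in u..v, (x - α) * (((k:ℝ)+2) * x^(k+1))
      = ((k:ℝ)+2)*(v^(k+3) - u^(k+3))/((k:ℝ)+3) - α*(v^(k+2) - u^(k+2)) := by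
  have h : ∀ x : ℝ, (x - α) * (((k:ℝ)+2) * x^(k+1))
      = ((k:ℝ)+2) * x^(k+2) - (α*((k:ℝ)+2)) * x^(k+1) := by intro x; ring
  simp only [h]
  rw [intervalIntegral.integral_sub (f := fun x : ℝ => ((k:ℝ)+2) * x^(k+2)) (g := fun x : ℝ => (α*((k:ℝ)+2)) * x^(k+1)) ((continuous_const.mul (continuous_pow _)).intervalIntegrable _ _)
      ((continuous_const.mul (continuous_pow _)).intervalIntegrable _ _),
    intervalIntegral.integral_const_mul, intervalIntegral.integral_const_mul,
    integral_pow, integral_pow]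
  push_cast
  have h1 : (k:ℝ) + 2 + 1 = (k:ℝ) + 3 := by ring
  have h2 : (k:ℝ) + 1 + 1 = (k:ℝ) + 2 := by ring
  rw [h1, h2]
  have hk3 : (k:ℝ) + 3 ≠ 0 := by positivity
  have hk2 : (k:ℝ) + 2 ≠ 0 := by positivity
  field_simp

private lemma bd_lem (k : ℕ) (c u v α : ℝ) (huv : u ≤ v) (hc : ∀ x ∈ Set.Icc u v, |x| ≤ c) :
    |∫ x in u..v, (x - α) * (((k:ℝ)+2) * x^(k+1))|
      ≤ (∫ x in u..v, |x - α|) * (((k:ℝ)+2) * c^(k+1)) := by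
  have hcont : Continuous fun x : ℝ => (x - α) * (((k:ℝ)+2) * x^(k+1)) := by continuity
  have h1 : |∫ x in u..v, (x - α) * (((k:ℝ)+2) * x^(k+1))|
      ≤ ∫ x in u..v, |(x - α) * (((k:ℝ)+2) * x^(k+1))| := by
    simpa only [Real.norm_eq_abs] using
      intervalIntegral.norm_integral_le_integral_norm (μ := volume)
        (f := fun x : ℝ => (x - α) * (((k:ℝ)+2) * x^(k+1))) huv
  rw [← intervalIntegral.integral_mul_const]
  refine h1.trans ?_
  apply intervalIntegral.integral_mono_on huv
    (hcont.abs.intervalIntegrable _ _)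
    (((continuous_abs.comp (continuous_id.sub continuous_const)).mul continuous_const).intervalIntegrable _ _)
  intro x hx
  rw [abs_mul, abs_mul, abs_pow, abs_of_nonneg (by positivity : (0:ℝ) ≤ ((k:ℝ)+2))]
  have := hc x hx
  have h2 : |x|^(k+1) ≤ c^(k+1) := pow_le_pow_left₀ (abs_nonneg x) this _
  have : ((k:ℝ)+2) * |x|^(k+1) ≤ ((k:ℝ)+2) * c^(k+1) := by nlinarith
  exact mul_le_mul_of_nonneg_left this (abs_nonneg _)

private lemma absint_left (u v α : ℝ) (huv : u ≤ v) (h : v ≤ α) :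
    ∫ x in u..v, |x - α| = ((α-u)^2 - (α-v)^2)/2 := by
  have : ∫ x in u..v, |x - α| = ∫ x in u..v, (α - x) := by
    apply intervalIntegral.integral_congr
    intro x hx
    rw [Set.uIcc_of_le huv] at hx
    dsimp only
    rw [abs_of_nonpos (by linarith [hx.2] : x - α ≤ 0)]
    ring
  rw [this, intervalIntegral.integral_sub intervalIntegrable_const
    (continuous_id'.intervalIntegrable u v : IntervalIntegrable (fun x : ℝ => x) volume u v)]
  simp [integral_id]
  ring

private lemma absint_right (u v α : ℝ) (huv : u ≤ v) (h : α ≤ u) :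
    ∫ x in u..v, |x - α| = ((v-α)^2 - (u-α)^2)/2 := by
  have : ∫ x in u..v, |x - α| = ∫ x in u..v, (x - α) := by
    apply intervalIntegral.integral_congr
    intro x hx
    rw [Set.uIcc_of_le huv] at hx
    dsimp only
    rw [abs_of_nonneg (by linarith [hx.1] : 0 ≤ x - α)]
  rw [this, intervalIntegral.integral_sub
    (continuous_id'.intervalIntegrable u v : IntervalIntegrable (fun x : ℝ => x) volume u v)
    intervalIntegrable_const]
  simp [integral_id]
  ring

theorem stmt_12 (a b : ℝ) (hab : a < b) (n : ℕ) (hn : 2 ≤ n) (q : ℝ) (hq : 1 ≤ q) :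
    |(1 / 3) * ((a ^ n + b ^ n) / 2) + (2 / 3) * ((a + b) / 2) ^ n - (b ^ (n + 1) - a ^ (n + 1)) / (((n : ℝ) + 1) * (b - a))|
      ≤ (5 * (n : ℝ) * (b - a) / 36) * (|b| ^ (((n : ℝ) - 1) * q) + |a| ^ (((n : ℝ) - 1) * q)) ^ (1 / q) := by
  obtain ⟨k, rfl⟩ : ∃ k, n = k + 2 := ⟨n - 2, by omega⟩
  set m : ℝ := (a + b) / 2 with hm
  set α : ℝ := (5*a + b) / 6 with hα
  set β : ℝ := (a + 5*b) / 6 with hβ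
  set c : ℝ := max |a| |b| with hc
  have hba : (0:ℝ) < b - a := by linarith
  have haα : a ≤ α := by rw [hα]; linarith
  have hαm : α ≤ m := by rw [hα, hm]; linarith
  have hmβ : m ≤ β := by rw [hm, hβ]; linarith
  have hβb : β ≤ b := by rw [hβ]; linarith
  have hcnn : 0 ≤ c := le_trans (abs_nonneg a) (le_max_left _ _)
  have habs : ∀ x ∈ Set.Icc a b, |x| ≤ c := by
    intro x hx
    rw [abs_le]
    refine ⟨?_, ?_⟩
    · linarith [neg_abs_le a, hx.1, le_max_left |a| |b|]
    · linarith [le_abs_self b, hx.2, le_max_right |a| |b|]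
  have hsub : ∀ u v : ℝ, a ≤ u → v ≤ b → ∀ x ∈ Set.Icc u v, |x| ≤ c := by
    intro u v hu hv x hx
    exact habs x ⟨le_trans hu hx.1, le_trans hx.2 hv⟩
  set K : ℝ := ((k:ℝ)+2) * c^(k+1) with hK
  have hKnn : 0 ≤ K := by positivity
  -- integrability for splitting
  have hint : ∀ γ u v : ℝ, IntervalIntegrable (fun x : ℝ => (x - γ) * (((k:ℝ)+2) * x^(k+1))) volume u v := by
    intro γ u v
    exact (by continuity : Continuous fun x : ℝ => (x - γ) * (((k:ℝ)+2) * x^(k+1))).intervalIntegrable u v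
  -- the key identity
  set I1 : ℝ := ∫ x in a..m, (x - α) * (((k:ℝ)+2) * x^(k+1)) with hI1
  set I2 : ℝ := ∫ x in m..b, (x - β) * (((k:ℝ)+2) * x^(k+1)) with hI2
  have hid : (1 / 3) * ((a ^ (k+2) + b ^ (k+2)) / 2) + (2 / 3) * m ^ (k+2)
      - (b ^ (k+2 + 1) - a ^ (k+2 + 1)) / ((((k+2 : ℕ) : ℝ) + 1) * (b - a))
      = (I1 + I2) / (b - a) := by
    rw [hI1, hI2, comp_lem, comp_lem]
    have hk3 : (k:ℝ) + 3 ≠ 0 := by positivity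
    have hne : b - a ≠ 0 := ne_of_gt hba
    push_cast
    rw [hα, hβ]
    field_simp
    ring
  -- bounds on the four pieces
  have e1 : |∫ x in a..α, (x - α) * (((k:ℝ)+2) * x^(k+1))| ≤ ((b-a)^2/72) * K := by
    refine (bd_lem k c a α α haα (hsub a α le_rfl (le_trans hαm (le_trans hmβ hβb)))).trans ?_
    rw [absint_left a α α haα le_rfl]
    rw [← hK]
    have : ((α - a)^2 - (α - α)^2)/2 = (b-a)^2/72 := by rw [hα]; ring
    rw [this]
  have e2 : |∫ x in α..m, (x - α) * (((k:ℝ)+2) * x^(k+1))| ≤ ((b-a)^2/18) * K := by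
    refine (bd_lem k c α m α hαm (hsub α m haα (le_trans hmβ hβb))).trans ?_
    rw [absint_right α m α hαm le_rfl, ← hK]
    have : ((m - α)^2 - (α - α)^2)/2 = (b-a)^2/18 := by rw [hm, hα]; ring
    rw [this]
  have e3 : |∫ x in m..β, (x - β) * (((k:ℝ)+2) * x^(k+1))| ≤ ((b-a)^2/18) * K := by
    refine (bd_lem k c m β β hmβ (hsub m β (le_trans haα hαm) hβb)).trans ?_
    rw [absint_left m β β hmβ le_rfl, ← hK]
    have : ((β - m)^2 - (β - β)^2)/2 = (b-a)^2/18 := by rw [hm, hβ]; ring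
    rw [this]
  have e4 : |∫ x in β..b, (x - β) * (((k:ℝ)+2) * x^(k+1))| ≤ ((b-a)^2/72) * K := by
    refine (bd_lem k c β b β hβb (hsub β b (le_trans haα (le_trans hαm hmβ)) le_rfl)).trans ?_
    rw [absint_right β b β hβb le_rfl, ← hK]
    have : ((b - β)^2 - (β - β)^2)/2 = (b-a)^2/72 := by rw [hβ]; ring
    rw [this]
  have hI1b : |I1| ≤ ((b-a)^2*(5/72)) * K := by
    rw [hI1, ← intervalIntegral.integral_add_adjacent_intervals (hint α a α) (hint α α m)]
    calc |(∫ x in a..α, (x - α) * (((k:ℝ)+2) * x^(k+1))) + ∫ x in α..m, (x - α) * (((k:ℝ)+2) * x^(k+1))|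
        ≤ |∫ x in a..α, (x - α) * (((k:ℝ)+2) * x^(k+1))| + |∫ x in α..m, (x - α) * (((k:ℝ)+2) * x^(k+1))| := abs_add_le _ _
      _ ≤ ((b-a)^2/72) * K + ((b-a)^2/18) * K := add_le_add e1 e2
      _ = ((b-a)^2*(5/72)) * K := by ring
  have hI2b : |I2| ≤ ((b-a)^2*(5/72)) * K := by
    rw [hI2, ← intervalIntegral.integral_add_adjacent_intervals (hint β m β) (hint β β b)]
    calc |(∫ x in m..β, (x - β) * (((k:ℝ)+2) * x^(k+1))) + ∫ x in β..b, (x - β) * (((k:ℝ)+2) * x^(k+1))|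
        ≤ |∫ x in m..β, (x - β) * (((k:ℝ)+2) * x^(k+1))| + |∫ x in β..b, (x - β) * (((k:ℝ)+2) * x^(k+1))| := abs_add_le _ _
      _ ≤ ((b-a)^2/18) * K + ((b-a)^2/72) * K := add_le_add e3 e4
      _ = ((b-a)^2*(5/72)) * K := by ring
  -- LHS bound
  have hLHS : |(1 / 3) * ((a ^ (k+2) + b ^ (k+2)) / 2) + (2 / 3) * m ^ (k+2)
      - (b ^ (k+2+1) - a ^ (k+2+1)) / (((((k+2:ℕ)) : ℝ) + 1) * (b - a))|
      ≤ 5 * (b - a) / 36 * K := by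
    rw [hid, abs_div, abs_of_pos hba, div_le_iff₀ hba]
    calc |I1 + I2| ≤ |I1| + |I2| := abs_add_le _ _
      _ ≤ ((b-a)^2*(5/72)) * K + ((b-a)^2*(5/72)) * K := add_le_add hI1b hI2b
      _ = 5 * (b - a) / 36 * K * (b - a) := by ring
  -- RHS bound
  have hqpos : (0:ℝ) < q := by linarith
  have hRHS : c ^ (k+1) ≤ (|b| ^ ((((k+2:ℕ):ℝ) - 1) * q) + |a| ^ ((((k+2:ℕ):ℝ) - 1) * q)) ^ (1 / q) := by
    have he : (((k+2:ℕ):ℝ) - 1) * q = ((k:ℝ)+1) * q := by push_cast; ring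
    rw [he]
    have hann : (0:ℝ) ≤ |a| := abs_nonneg a
    have hbnn : (0:ℝ) ≤ |b| := abs_nonneg b
    have hepos : (0:ℝ) ≤ ((k:ℝ)+1) * q := by positivity
    have hmax : c ^ (((k:ℝ)+1) * q) ≤ |b| ^ (((k:ℝ)+1) * q) + |a| ^ (((k:ℝ)+1) * q) := by
      rcases max_cases |a| |b| with ⟨h1, h2⟩ | ⟨h1, h2⟩
      · rw [hc, h1]
        have : (0:ℝ) ≤ |b| ^ (((k:ℝ)+1) * q) := rpow_nonneg hbnn _
        linarith
      · rw [hc, h1]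
        have : (0:ℝ) ≤ |a| ^ (((k:ℝ)+1) * q) := rpow_nonneg hann _
        linarith
    calc c ^ (k+1) = (c ^ ((((k:ℝ)+1) * q))) ^ (1/q) := by
          rw [← Real.rpow_natCast c (k+1), ← Real.rpow_mul hcnn]
          congr 1
          push_cast
          field_simp
      _ ≤ (|b| ^ (((k:ℝ)+1) * q) + |a| ^ (((k:ℝ)+1) * q)) ^ (1 / q) :=
          Real.rpow_le_rpow (rpow_nonneg hcnn _) hmax (by positivity)
  -- combine
  have hfinal : 5 * (b - a) / 36 * K
      ≤ (5 * (((k+2:ℕ)):ℝ) * (b - a) / 36) * (|b| ^ ((((k+2:ℕ):ℝ) - 1) * q) + |a| ^ ((((k+2:ℕ):ℝ) - 1) * q)) ^ (1 / q) := by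
    rw [hK]
    have h1 : 5 * (b - a) / 36 * (((k:ℝ)+2) * c^(k+1))
        = (5 * (((k+2:ℕ)):ℝ) * (b - a) / 36) * c^(k+1) := by push_cast; ring
    rw [h1]
    apply mul_le_mul_of_nonneg_left hRHS
    positivity
  exact hLHS.trans hfinal
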